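/- Suppose a convex-concave saddle function S(u, v) on bounded convex sets U × V and iterates with ergodic average (û, v̂) satisfy the duality-gap bound max_{v ∈ V} S(û, v) − min_{u ∈ U} S(u, v̂) ≤ ε. If S(u, v) = f(u) + vᵀ(Au − b) with V = {v : ‖v‖ ≤ 2‖v*‖} containing an optimal dual v*, then f(û) − f(u*) ≤ ε and ‖v*‖ · ‖Aû − b‖ ≤ ε. -/

import Mathlib

open Matrix

/-- If the ergodic iterate `(û, v̂)` of a saddle method for the Lagrangian
`S(u,v) = f(u) + ⟨v, Au − b⟩` on `U × V`, with `V = {v : ‖v‖ ≤ 2‖v*‖}` containing an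
optimal dual `v*`, has duality gap at most `ε`, then `f(û) − f(u*) ≤ ε` and
`‖v*‖ · ‖A û − b‖ ≤ ε`. -/
theorem gap_implies_residuals {m n : ℕ}
    (f : EuclideanSpace ℝ (Fin n) → ℝ) (A : Matrix (Fin m) (Fin n) ℝ)
    (b : EuclideanSpace ℝ (Fin m)) (U : Set (EuclideanSpace ℝ (Fin n)))
    (hUconv : Convex ℝ U) (hUbdd : Bornology.IsBounded U)
    (hfconv : ConvexOn ℝ U f)
    (us : EuclideanSpace ℝ (Fin n)) (vs : EuclideanSpace ℝ (Fin m))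
    (husU : us ∈ U) (husfeas : Matrix.toEuclideanLin A us = b)
    (husopt : ∀ u ∈ U, Matrix.toEuclideanLin A u = b → f us ≤ f u)
    (hvsopt : ∀ u ∈ U, f us ≤ f u + inner ℝ vs (Matrix.toEuclideanLin A u - b))
    (V : Set (EuclideanSpace ℝ (Fin m))) (hV : V = {v | ‖v‖ ≤ 2 * ‖vs‖})
    (uhat : EuclideanSpace ℝ (Fin n)) (vhat : EuclideanSpace ℝ (Fin m))
    (huhat : uhat ∈ U) (hvhat : vhat ∈ V) (ε : ℝ)
    (hgap : ∀ v ∈ V, ∀ u ∈ U,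
      (f uhat + inner ℝ v (Matrix.toEuclideanLin A uhat - b)) -
        (f u + inner ℝ vhat (Matrix.toEuclideanLin A u - b)) ≤ ε) :
    f uhat - f us ≤ ε ∧ ‖vs‖ * ‖Matrix.toEuclideanLin A uhat - b‖ ≤ ε := by
  set r : EuclideanSpace ℝ (Fin m) := Matrix.toEuclideanLin A uhat - b with hr
  have h0V : (0 : EuclideanSpace ℝ (Fin m)) ∈ V := by
    rw [hV]; simp only [Set.mem_setOf_eq, norm_zero]; positivity
  have heps : 0 ≤ ε := by
    have := hgap vhat hvhat uhat huhat
    linarith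
  have h1 : f uhat - f us ≤ ε := by
    have := hgap 0 h0V us husU
    simpa [husfeas] using this
  refine ⟨h1, ?_⟩
  by_cases hr0 : r = 0
  · simp [hr0, heps]
  · have hrpos : (0:ℝ) < ‖r‖ := norm_pos_iff.mpr hr0
    set v : EuclideanSpace ℝ (Fin m) := (2 * ‖vs‖ / ‖r‖) • r with hv
    have hvV : v ∈ V := by
      rw [hV]
      simp only [Set.mem_setOf_eq, hv, norm_smul, Real.norm_eq_abs]
      rw [abs_of_nonneg (by positivity)]
      rw [div_mul_cancel₀ _ (ne_of_gt hrpos)]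
    have hinner : (inner ℝ v r : ℝ) = 2 * ‖vs‖ * ‖r‖ := by
      rw [hv, real_inner_smul_left, real_inner_self_eq_norm_sq]
      field_simp
    have h2 : f uhat + 2 * ‖vs‖ * ‖r‖ - f us ≤ ε := by
      have := hgap v hvV us husU
      simpa [husfeas, hinner] using this
    have h3 : f us ≤ f uhat + ‖vs‖ * ‖r‖ := by
      have := hvsopt uhat huhat
      have hcs : (inner ℝ vs r : ℝ) ≤ ‖vs‖ * ‖r‖ := real_inner_le_norm vs r
      linarith
    linarith
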